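/- Let n₃ be the 3-dimensional real Heisenberg Lie algebra with basis e₁,e₂,e₃ and brackets [e₁,e₂]=e₃, [e₁,e₃]=[e₂,e₃]=0, let m = span(e₁,e₂), and let D₁, D₂ ∈ δ⁺(n₃) be derivations with D₁(m) ⊆ m and D₂(m) ⊆ m. Denote by (Dᵢ)_m the restriction of Dᵢ to m. Then the expanded Lie algebras n₃(D₁) and n₃(D₂) are isomorphic as Lie algebras if and only if there exist an invertible linear map g of m and a real number λ ≠ 0 such that (D₁)_m = λ · g⁻¹ ∘ (D₂)_m ∘ g. -/

import Mathlib

open Module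

/-- `D` is a derivation of the real Lie algebra `L`. -/
def IsLieDeriv {L : Type*} [LieRing L] [LieAlgebra ℝ L] (D : Module.End ℝ L) : Prop :=
  ∀ x y : L, D ⁅x, y⁆ = ⁅D x, y⁆ + ⁅x, D y⁆

/-- All eigenvalues (complex roots of the characteristic polynomial) of `f` have
positive real part. -/
def PosSpec {V : Type*} [AddCommGroup V] [Module ℝ V] [Module.Finite ℝ V]
    (f : Module.End ℝ V) : Prop :=
  ∀ z ∈ ((LinearMap.charpoly f).map (algebraMap ℝ ℂ)).roots, 0 < z.re

/-- The bracket of the expanded Lie algebra `n(D) = n ⊕ ℝ`, where `A_D = (0,1)`. -/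
def expBracket {L : Type*} [LieRing L] [LieAlgebra ℝ L] (D : Module.End ℝ L)
    (p q : L × ℝ) : L × ℝ :=
  (⁅p.1, q.1⁆ + p.2 • D q.1 - q.2 • D p.1, 0)

/-- The expanded Lie algebras `n(D₁)` and `n(D₂)` are isomorphic as Lie algebras. -/
def ExpIso {L : Type*} [LieRing L] [LieAlgebra ℝ L] (D₁ D₂ : Module.End ℝ L) : Prop :=
  ∃ e : (L × ℝ) ≃ₗ[ℝ] (L × ℝ), ∀ p q, e (expBracket D₁ p q) = expBracket D₂ (e p) (e q)


section
variable {L : Type*} [LieRing L] [LieAlgebra ℝ L]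

lemma brkt (e : Basis (Fin 3) ℝ L)
    (h12 : ⁅e 0, e 1⁆ = e 2) (h13 : ⁅e 0, e 2⁆ = 0) (h23 : ⁅e 1, e 2⁆ = 0) (x y : L) :
    ⁅x, y⁆ = (e.repr x 0 * e.repr y 1 - e.repr x 1 * e.repr y 0) • e 2 := by
  have h21 : ⁅e 1, e 0⁆ = -(e 2) := by rw [← lie_skew, h12]
  have h31 : ⁅e 2, e 0⁆ = 0 := by rw [← lie_skew, h13]; simp
  have h32 : ⁅e 2, e 1⁆ = 0 := by rw [← lie_skew, h23]; simp
  conv_lhs => rw [← e.sum_repr x, ← e.sum_repr y]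
  rw [Fin.sum_univ_three, Fin.sum_univ_three]
  simp only [add_lie, lie_add, smul_lie, lie_smul, h12, h13, h23, h21, h31, h32,
    lie_self, smul_zero, add_zero, zero_add, smul_neg, smul_smul]
  module

lemma mem_m_iff (e : Basis (Fin 3) ℝ L) (m : Submodule ℝ L)
    (hm : m = Submodule.span ℝ {e 0, e 1}) (x : L) : x ∈ m ↔ e.repr x 2 = 0 := by
  subst hm
  constructor
  · intro hx
    induction hx using Submodule.span_induction with
    | mem z hz => rcases hz with h | h <;> subst h <;> simp [Basis.repr_self]
    | zero => simp
    | smul a z hz ih => simp [ih]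
    | add z w hz hw ihz ihw => simp [ihz, ihw]
  · intro hx
    have hx3 : x = e.repr x 0 • e 0 + e.repr x 1 • e 1 := by
      conv_lhs => rw [← e.sum_repr x]
      rw [Fin.sum_univ_three, hx, zero_smul, add_zero]
    rw [hx3]
    exact Submodule.add_mem _
      (Submodule.smul_mem _ _ (Submodule.subset_span (Or.inl rfl)))
      (Submodule.smul_mem _ _ (Submodule.subset_span (Or.inr rfl)))

lemma deriv_e2 (e : Basis (Fin 3) ℝ L)
    (h12 : ⁅e 0, e 1⁆ = e 2) (h13 : ⁅e 0, e 2⁆ = 0) (h23 : ⁅e 1, e 2⁆ = 0)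
    (D : Module.End ℝ L) (hd : IsLieDeriv D) :
    D (e 2) = (e.repr (D (e 0)) 0 + e.repr (D (e 1)) 1) • e 2 := by
  have h := hd (e 0) (e 1)
  rw [h12] at h
  rw [h, brkt e h12 h13 h23 (D (e 0)) (e 1), brkt e h12 h13 h23 (e 0) (D (e 1))]
  simp [Basis.repr_self]
  module

lemma posSpec_surj {V : Type*} [AddCommGroup V] [Module ℝ V] [Module.Finite ℝ V]
    (f : Module.End ℝ V) (hp : PosSpec f) : Function.Surjective f := by
  have : FiniteDimensional ℝ V := inferInstance
  rw [← LinearMap.injective_iff_surjective]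
  by_contra hinj
  obtain ⟨v, hv, hv0⟩ : ∃ v, f v = 0 ∧ v ≠ 0 := by
    simp only [Function.Injective] at hinj
    push_neg at hinj
    obtain ⟨a, b, hab, hne⟩ := hinj
    exact ⟨a - b, by simp [map_sub, hab], sub_ne_zero.mpr hne⟩
  have heig : Module.End.HasEigenvalue f 0 := by
    apply Module.End.hasEigenvalue_of_hasEigenvector ⟨?_, hv0⟩
    simp [Module.End.mem_eigenspace_iff, hv]
  have hroot : (LinearMap.charpoly f).IsRoot 0 := by
    have h1 := Module.End.isRoot_of_hasEigenvalue heig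
    have h2 := LinearMap.minpoly_dvd_charpoly f
    exact h1.dvd h2
  have hmem : (0 : ℂ) ∈ ((LinearMap.charpoly f).map (algebraMap ℝ ℂ)).roots := by
    rw [Polynomial.mem_roots ((LinearMap.charpoly_monic f).map _).ne_zero]
    rw [Polynomial.IsRoot, Polynomial.eval_map]
    have h3 : Polynomial.eval₂ (algebraMap ℝ ℂ) 0 (LinearMap.charpoly f)
        = algebraMap ℝ ℂ ((LinearMap.charpoly f).eval 0) := by
      rw [← Polynomial.eval₂_at_apply]; simp
    rw [h3, hroot.eq_zero]; simp
  have := hp 0 hmem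
  simp at this

lemma fwd [Module.Finite ℝ L] (e : Basis (Fin 3) ℝ L)
    (h12 : ⁅e 0, e 1⁆ = e 2) (h13 : ⁅e 0, e 2⁆ = 0) (h23 : ⁅e 1, e 2⁆ = 0)
    (m : Submodule ℝ L) (hm : m = Submodule.span ℝ {e 0, e 1})
    (D₁ D₂ : Module.End ℝ L) (hd₁ : IsLieDeriv D₁) (hd₂ : IsLieDeriv D₂)
    (hp₁ : PosSpec D₁) (hp₂ : PosSpec D₂)
    (hm₁ : ∀ x ∈ m, D₁ x ∈ m) (hm₂ : ∀ x ∈ m, D₂ x ∈ m)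
    (hiso : ExpIso D₁ D₂) :
    ∃ (gm : m ≃ₗ[ℝ] m) (lam : ℝ), lam ≠ 0 ∧
        ∀ v : m, (LinearMap.restrict D₁ hm₁) v
          = lam • gm.symm ((LinearMap.restrict D₂ hm₂) (gm v)) := by
  have : FiniteDimensional ℝ L := inferInstance
  obtain ⟨Φ, hΦ⟩ := hiso
  have surj₁ := posSpec_surj D₁ hp₁
  have hsnd : ∀ X : L, (Φ (X, 0)).2 = 0 := by
    intro X
    obtain ⟨Y, hY⟩ := surj₁ X
    have hXY : ((X, (0:ℝ)) : L × ℝ) = expBracket D₁ (Y, 0) (0, -1) := by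
      simp [expBracket, hY]
    rw [hXY, hΦ]
    simp [expBracket]
  set φ₀ : L →ₗ[ℝ] L :=
    (LinearMap.fst ℝ L ℝ) ∘ₗ (Φ.toLinearMap ∘ₗ LinearMap.inl ℝ L ℝ) with hφ₀def
  have hφ : ∀ X : L, Φ (X, 0) = (φ₀ X, 0) := by
    intro X
    exact Prod.ext rfl (hsnd X)
  have hinj : Function.Injective φ₀ := by
    intro a b hab
    have h1 : Φ (a, 0) = Φ (b, 0) := by rw [hφ, hφ, hab]
    have h2 := Φ.injective h1
    exact congrArg Prod.fst h2
  have hlie : ∀ x y : L, φ₀ ⁅x, y⁆ = ⁅φ₀ x, φ₀ y⁆ := by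
    intro x y
    have h := hΦ (x, 0) (y, 0)
    have h2 : expBracket D₁ (x, 0) (y, 0) = (⁅x, y⁆, 0) := by simp [expBracket]
    rw [h2, hφ, hφ x, hφ y] at h
    have h3 := congrArg Prod.fst h
    simpa [expBracket] using h3
  set w := (Φ (0, 1)).1 with hw
  set μ := (Φ (0, 1)).2 with hμdef
  have hΦ01 : Φ (0, 1) = (w, μ) := rfl
  have hkey : ∀ X : L, φ₀ (D₁ X) = ⁅w, φ₀ X⁆ + μ • D₂ (φ₀ X) := by
    intro X
    have h := hΦ (0, 1) (X, 0)
    have h1 : expBracket D₁ (0, 1) (X, 0) = (D₁ X, 0) := by simp [expBracket]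
    rw [h1, hφ, hφ, hΦ01] at h
    have h3 := congrArg Prod.fst h
    simpa [expBracket] using h3
  have hμ : μ ≠ 0 := by
    intro h0
    have hall : ∀ p : L × ℝ, (Φ p).2 = 0 := by
      intro p
      have hp : p = (p.1, 0) + p.2 • ((0 : L), (1 : ℝ)) := by
        simp [Prod.ext_iff]
      rw [hp, map_add, map_smul]
      have h1 := hsnd p.1
      simp [Prod.snd_add, Prod.smul_snd, h1, hΦ01, h0]
    have hcontr := hall (Φ.symm (0, 1))
    simp at hcontr
  -- κ : φ₀ maps e2 to κ • e2
  set κ : ℝ := e.repr (φ₀ (e 0)) 0 * e.repr (φ₀ (e 1)) 1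
      - e.repr (φ₀ (e 0)) 1 * e.repr (φ₀ (e 1)) 0 with hκdef
  have hκ : φ₀ (e 2) = κ • e 2 := by
    conv_lhs => rw [← h12]
    rw [hlie, brkt e h12 h13 h23]
  have hκ0 : κ ≠ 0 := by
    intro h0
    apply e.ne_zero 2
    apply hinj
    rw [hκ, h0, zero_smul, map_zero]
  have hpre : ∀ (v : L) (c : ℝ), φ₀ v = c • e 2 → v = (c / κ) • e 2 := by
    intro v c h
    apply hinj
    rw [map_smul, hκ, h, smul_smul, div_mul_cancel₀ _ hκ0]
  -- projection
  set P : L →ₗ[ℝ] L := LinearMap.id - (e.coord 2).smulRight (e 2) with hP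
  have hPapp : ∀ x : L, P x = x - e.repr x 2 • e 2 := by
    intro x; simp [hP, LinearMap.smulRight_apply, Basis.coord_apply]
  have hPmem : ∀ x : L, P x ∈ m := by
    intro x
    rw [mem_m_iff e m hm, hPapp]
    simp [Basis.repr_self]
  set glin : m →ₗ[ℝ] m := (P ∘ₗ φ₀ ∘ₗ m.subtype).codRestrict m (fun v => hPmem _) with hg
  have hglin : ∀ v : m, (glin v : L) = φ₀ (v : L) - e.repr (φ₀ (v : L)) 2 • e 2 := by
    intro v; simp [hg, hPapp]
  have hginj : Function.Injective glin := by
    intro a b hab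
    have hv := congrArg (Subtype.val) hab
    rw [hglin, hglin] at hv
    have h1 : φ₀ ((a : L) - (b : L)) = (e.repr (φ₀ (a : L)) 2 - e.repr (φ₀ (b : L)) 2) • e 2 := by
      rw [map_sub, sub_smul]
      linear_combination (norm := module) hv
    have h2 := hpre _ _ h1
    have h3 : (a : L) - (b : L) ∈ m := sub_mem a.2 b.2
    rw [h2, mem_m_iff e m hm] at h3
    rw [map_smul, Finsupp.smul_apply, Basis.repr_self, Finsupp.single_eq_same,
      smul_eq_mul, mul_one, div_eq_zero_iff] at h3
    apply Subtype.ext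
    rw [← sub_eq_zero, h2]
    rcases h3 with h3 | h3
    · rw [h3, zero_div, zero_smul]
    · exact absurd h3 hκ0
  have hgsurj : Function.Surjective glin := by
    have : FiniteDimensional ℝ m := inferInstance
    exact LinearMap.injective_iff_surjective.mp hginj
  set gm : m ≃ₗ[ℝ] m := LinearEquiv.ofBijective glin ⟨hginj, hgsurj⟩ with hgm
  refine ⟨gm, μ, hμ, ?_⟩
  intro v
  have hgmapp : ∀ u : m, gm u = glin u := fun u => rfl
  set τ₂ : ℝ := e.repr (D₂ (e 0)) 0 + e.repr (D₂ (e 1)) 1 with hτ₂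
  have hD₂e2 : D₂ (e 2) = τ₂ • e 2 := deriv_e2 e h12 h13 h23 D₂ hd₂
  -- key : gm (D₁r v) = μ • D₂r (gm v)
  have key : gm ((LinearMap.restrict D₁ hm₁) v) = μ • ((LinearMap.restrict D₂ hm₂) (gm v)) := by
    set a : m := gm ((LinearMap.restrict D₁ hm₁) v) with ha
    set b : m := μ • ((LinearMap.restrict D₂ hm₂) (gm v)) with hb
    set c₁ : ℝ := e.repr (φ₀ (D₁ (v : L))) 2 with hc₁
    set c₀ : ℝ := e.repr (φ₀ (v : L)) 2 with hc₀
    set δ : ℝ := (e.repr w 0 * e.repr (φ₀ (v : L)) 1 - e.repr w 1 * e.repr (φ₀ (v : L)) 0)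
        - c₁ + μ * (c₀ * τ₂) with hδdef
    have hδ : (a : L) - (b : L) = δ • e 2 := by
      have hav : (a : L) = φ₀ (D₁ (v : L)) - c₁ • e 2 := by
        rw [ha, hgmapp, hglin, LinearMap.restrict_coe_apply]
      have hbv : (b : L) = μ • D₂ (φ₀ (v : L) - c₀ • e 2) := by
        rw [hb, Submodule.coe_smul, LinearMap.restrict_coe_apply, hgmapp, hglin]
      rw [hav, hbv, hkey, brkt e h12 h13 h23 w (φ₀ (v : L)), map_sub, map_smul, hD₂e2,
        hδdef]
      module
    have ha2 : e.repr (a : L) 2 = 0 := (mem_m_iff e m hm _).mp a.2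
    have hb2 : e.repr (b : L) 2 = 0 := (mem_m_iff e m hm _).mp b.2
    have hδ0 : δ = 0 := by
      have hq := congrArg (fun x => e.repr x 2) hδ
      simp only [map_sub, Finsupp.sub_apply, ha2, hb2, map_smul, Finsupp.smul_apply,
        Basis.repr_self, Finsupp.single_eq_same, smul_eq_mul, mul_one, sub_self] at hq
      exact hq.symm
    apply Subtype.ext
    rw [← sub_eq_zero, hδ, hδ0, zero_smul]
  have hfin := congrArg gm.symm key
  rw [LinearEquiv.symm_apply_apply, map_smul] at hfin
  exact hfin

lemma bwd [Module.Finite ℝ L] (e : Basis (Fin 3) ℝ L)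
    (h12 : ⁅e 0, e 1⁆ = e 2) (h13 : ⁅e 0, e 2⁆ = 0) (h23 : ⁅e 1, e 2⁆ = 0)
    (m : Submodule ℝ L) (hm : m = Submodule.span ℝ {e 0, e 1})
    (D₁ D₂ : Module.End ℝ L) (hd₁ : IsLieDeriv D₁) (hd₂ : IsLieDeriv D₂)
    (hm₁ : ∀ x ∈ m, D₁ x ∈ m) (hm₂ : ∀ x ∈ m, D₂ x ∈ m)
    (gm : m ≃ₗ[ℝ] m) (lam : ℝ) (hlam : lam ≠ 0)
    (hrel : ∀ v : m, (LinearMap.restrict D₁ hm₁) v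
          = lam • gm.symm ((LinearMap.restrict D₂ hm₂) (gm v))) :
    ExpIso D₁ D₂ := by
  have : FiniteDimensional ℝ L := inferInstance
  have hrel' : ∀ v : m, gm ((LinearMap.restrict D₁ hm₁) v)
      = lam • ((LinearMap.restrict D₂ hm₂) (gm v)) := by
    intro v
    rw [hrel v, map_smul, LinearEquiv.apply_symm_apply]
  have he0 : e 0 ∈ m := by rw [hm]; exact Submodule.subset_span (Or.inl rfl)
  have he1 : e 1 ∈ m := by rw [hm]; exact Submodule.subset_span (Or.inr rfl)
  set e0m : m := ⟨e 0, he0⟩ with he0m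
  set e1m : m := ⟨e 1, he1⟩ with he1m
  have mexpand : ∀ x ∈ m, x = e.repr x 0 • e 0 + e.repr x 1 • e 1 := by
    intro x hx
    rw [mem_m_iff e m hm] at hx
    conv_lhs => rw [← e.sum_repr x]
    rw [Fin.sum_univ_three, hx, zero_smul, add_zero]
  set A : ℝ := e.repr ((gm e0m : L)) 0 with hA
  set B : ℝ := e.repr ((gm e0m : L)) 1 with hB
  set R : ℝ := e.repr ((gm e1m : L)) 0 with hR
  set S : ℝ := e.repr ((gm e1m : L)) 1 with hS
  set det : ℝ := A * S - B * R with hdet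
  have hge0 : (gm e0m : L) = A • e 0 + B • e 1 := mexpand _ (gm e0m).2
  have hge1 : (gm e1m : L) = R • e 0 + S • e 1 := mexpand _ (gm e1m).2
  have hu : ∀ u : m, u = e.repr (u : L) 0 • e0m + e.repr (u : L) 1 • e1m := by
    intro u
    apply Subtype.ext
    push_cast [he0m, he1m]
    exact mexpand _ u.2
  have hgmu : ∀ u : m, (gm u : L)
      = e.repr (u : L) 0 • (gm e0m : L) + e.repr (u : L) 1 • (gm e1m : L) := by
    intro u
    conv_lhs => rw [hu u, map_add, map_smul, map_smul]
    rw [Submodule.coe_add, Submodule.coe_smul, Submodule.coe_smul]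
  -- det ≠ 0
  have hdet0 : det ≠ 0 := by
    intro h0
    have h0' : A * S - B * R = 0 := by rw [← hdet]; exact h0
    have key : ∀ (x y : ℝ), x * A + y * R = 0 → x * B + y * S = 0 →
        x • e0m + y • e1m = 0 := by
      intro x y hx hy
      have hz : gm (x • e0m + y • e1m) = 0 := by
        have hval : (gm (x • e0m + y • e1m) : L) = 0 := by
          push_cast [map_add, map_smul]
          rw [hge0, hge1]
          have : (x * A + y * R) • e 0 + (x * B + y * S) • e 1 = (0 : L) := by
            rw [hx, hy, zero_smul, zero_smul, add_zero]
          linear_combination (norm := module) this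
        exact Subtype.ext hval
      have h00 : gm (x • e0m + y • e1m) = gm 0 := by rw [hz, map_zero]
      exact gm.injective h00
    have h1 := key S (-B) (by linear_combination h0') (by ring)
    have h2 := key R (-A) (by ring) (by linear_combination -h0')
    -- extract coefficients
    have hS0 : S = 0 := by
      have := congrArg (fun u : m => e.repr (u : L) 0) h1
      simpa [he0m, he1m, Basis.repr_self] using this
    have hB0 : B = 0 := by
      have := congrArg (fun u : m => e.repr (u : L) 1) h1
      simpa [he0m, he1m, Basis.repr_self] using this
    have hR0 : R = 0 := by
      have := congrArg (fun u : m => e.repr (u : L) 0) h2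
      simpa [he0m, he1m, Basis.repr_self] using this
    have hA0 : A = 0 := by
      have := congrArg (fun u : m => e.repr (u : L) 1) h2
      simpa [he0m, he1m, Basis.repr_self] using this
    have : (gm e0m : L) = 0 := by rw [hge0, hA0, hB0, zero_smul, zero_smul, add_zero]
    have he00 : e0m = (0 : m) := gm.injective (Subtype.ext (by rw [this, map_zero]; rfl))
    have : e 0 = 0 := congrArg Subtype.val he00
    exact e.ne_zero 0 this
  -- scalar equations
  have hEq : ∀ (u : m) (i : Fin 3),
      e.repr (D₁ (u : L)) 0 * e.repr ((gm e0m : L)) i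
        + e.repr (D₁ (u : L)) 1 * e.repr ((gm e1m : L)) i
      = lam * (e.repr ((gm u : L)) 0 * e.repr (D₂ (e 0)) i
        + e.repr ((gm u : L)) 1 * e.repr (D₂ (e 1)) i) := by
    intro u i
    have h1 : (gm ((LinearMap.restrict D₁ hm₁) u) : L) = lam • D₂ ((gm u : L)) := by
      rw [hrel' u, Submodule.coe_smul, LinearMap.restrict_coe_apply]
    rw [hgmu ((LinearMap.restrict D₁ hm₁) u), LinearMap.restrict_coe_apply] at h1
    have h2 : D₂ ((gm u : L)) = e.repr ((gm u : L)) 0 • D₂ (e 0)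
        + e.repr ((gm u : L)) 1 • D₂ (e 1) := by
      conv_lhs => rw [mexpand _ (gm u).2]
      rw [map_add, map_smul, map_smul]
    rw [h2] at h1
    have h3 := congrArg (fun z => e.repr z i) h1
    simp only [map_add, map_smul, Finsupp.add_apply, Finsupp.smul_apply, smul_eq_mul,
      smul_add] at h3
    linear_combination h3
  have hE1 := hEq e0m 0
  have hE2 := hEq e0m 1
  have hE3 := hEq e1m 0
  have hE4 := hEq e1m 1
  simp only [show ((e0m : m) : L) = e 0 from rfl, show ((e1m : m) : L) = e 1 from rfl,
    ← hA, ← hB, ← hR, ← hS] at hE1 hE2 hE3 hE4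
  have htau : e.repr (D₁ (e 0)) 0 + e.repr (D₁ (e 1)) 1
      = lam * (e.repr (D₂ (e 0)) 0 + e.repr (D₂ (e 1)) 1) := by
    have hcancel : (e.repr (D₁ (e 0)) 0 + e.repr (D₁ (e 1)) 1) * det
        = lam * (e.repr (D₂ (e 0)) 0 + e.repr (D₂ (e 1)) 1) * det := by
      rw [hdet]
      linear_combination S * hE1 - R * hE2 - B * hE3 + A * hE4
    exact mul_right_cancel₀ hdet0 hcancel
  -- the automorphism φ₀
  set f : Fin 3 → L := ![(gm e0m : L), (gm e1m : L), det • e 2] with hf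
  set φ₀ : L →ₗ[ℝ] L := e.constr ℝ f with hφ₀
  have hφi0 : φ₀ (e 0) = (gm e0m : L) := by
    rw [hφ₀, Basis.constr_basis]; simp [hf]
  have hφi1 : φ₀ (e 1) = (gm e1m : L) := by
    rw [hφ₀, Basis.constr_basis]; simp [hf]
  have hφi2 : φ₀ (e 2) = det • e 2 := by
    rw [hφ₀, Basis.constr_basis]; simp [hf]
  have hφx : ∀ x : L, φ₀ x = e.repr x 0 • (gm e0m : L) + e.repr x 1 • (gm e1m : L)
      + (e.repr x 2 * det) • e 2 := by
    intro x
    conv_lhs => rw [← e.sum_repr x]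
    rw [Fin.sum_univ_three, map_add, map_add, map_smul, map_smul, map_smul,
      hφi0, hφi1, hφi2, smul_smul]
  have hφrep0 : ∀ x : L, e.repr (φ₀ x) 0 = e.repr x 0 * A + e.repr x 1 * R := by
    intro x
    rw [hφx x, hge0, hge1]
    simp [Basis.repr_self, Fin.ext_iff]
    try ring
  have hφrep1 : ∀ x : L, e.repr (φ₀ x) 1 = e.repr x 0 * B + e.repr x 1 * S := by
    intro x
    rw [hφx x, hge0, hge1]
    simp [Basis.repr_self, Fin.ext_iff]
    try ring
  have hφrep2 : ∀ x : L, e.repr (φ₀ x) 2 = e.repr x 2 * det := by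
    intro x
    rw [hφx x, hge0, hge1]
    simp [Basis.repr_self, Fin.ext_iff]
  have hφker : ∀ z : L, φ₀ z = 0 → z = 0 := by
    intro z hz
    have h0c := hφrep0 z
    have h1c := hφrep1 z
    have h2c := hφrep2 z
    rw [hz] at h0c h1c h2c
    simp only [map_zero, Finsupp.coe_zero, Pi.zero_apply] at h0c h1c h2c
    have hz2 : e.repr z 2 = 0 := by
      rcases mul_eq_zero.mp h2c.symm with h | h
      · exact h
      · exact absurd h hdet0
    have hz0 : e.repr z 0 = 0 := by
      have : e.repr z 0 * det = 0 := by rw [hdet]; linear_combination (-S) * h0c + R * h1c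
      rcases mul_eq_zero.mp this with h | h
      · exact h
      · exact absurd h hdet0
    have hz1 : e.repr z 1 = 0 := by
      have : e.repr z 1 * det = 0 := by rw [hdet]; linear_combination B * h0c + (-A) * h1c
      rcases mul_eq_zero.mp this with h | h
      · exact h
      · exact absurd h hdet0
    have : ∀ i, e.repr z i = e.repr (0 : L) i := by
      intro i
      fin_cases i <;> simp [hz0, hz1, hz2]
    exact e.ext_elem this
  have hφinj : Function.Injective φ₀ := by
    intro x y hxy
    have := hφker (x - y) (by rw [map_sub, hxy, sub_self])
    exact sub_eq_zero.mp this
  have hφsurj : Function.Surjective φ₀ := LinearMap.injective_iff_surjective.mp hφinj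
  have hφm : ∀ u : m, φ₀ (u : L) = (gm u : L) := by
    intro u
    rw [hφx, hgmu u, (mem_m_iff e m hm _).mp u.2]
    simp
  have hcomm : ∀ x : L, φ₀ (D₁ x) = lam • D₂ (φ₀ x) := by
    suffices h : φ₀ ∘ₗ D₁ = lam • (D₂ ∘ₗ φ₀) by
      intro x
      have := LinearMap.congr_fun h x
      simpa using this
    apply Basis.ext e
    intro i
    fin_cases i
    · show φ₀ (D₁ (e 0)) = lam • D₂ (φ₀ (e 0))
      have hD1e0 : D₁ (e 0) ∈ m := hm₁ _ he0
      have l1 : φ₀ (D₁ (e 0)) = (gm ⟨D₁ (e 0), hD1e0⟩ : L) := hφm ⟨_, hD1e0⟩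
      have l2 : (⟨D₁ (e 0), hD1e0⟩ : m) = (LinearMap.restrict D₁ hm₁) e0m :=
        Subtype.ext (by rw [LinearMap.restrict_coe_apply])
      rw [l1, l2, hrel' e0m, Submodule.coe_smul, LinearMap.restrict_coe_apply, hφi0]
    · show φ₀ (D₁ (e 1)) = lam • D₂ (φ₀ (e 1))
      have hD1e1 : D₁ (e 1) ∈ m := hm₁ _ he1
      have l1 : φ₀ (D₁ (e 1)) = (gm ⟨D₁ (e 1), hD1e1⟩ : L) := hφm ⟨_, hD1e1⟩
      have l2 : (⟨D₁ (e 1), hD1e1⟩ : m) = (LinearMap.restrict D₁ hm₁) e1m :=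
        Subtype.ext (by rw [LinearMap.restrict_coe_apply])
      rw [l1, l2, hrel' e1m, Submodule.coe_smul, LinearMap.restrict_coe_apply, hφi1]
    · show φ₀ (D₁ (e 2)) = lam • D₂ (φ₀ (e 2))
      rw [deriv_e2 e h12 h13 h23 D₁ hd₁, map_smul, hφi2, map_smul,
        deriv_e2 e h12 h13 h23 D₂ hd₂]
      match_scalars
      linear_combination det * htau
  have hbr : ∀ x y : L, φ₀ ⁅x, y⁆ = ⁅φ₀ x, φ₀ y⁆ := by
    intro x y
    rw [brkt e h12 h13 h23 x y, map_smul, hφi2, brkt e h12 h13 h23 (φ₀ x) (φ₀ y),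
      hφrep0 x, hφrep1 x, hφrep0 y, hφrep1 y, smul_smul]
    congr 1
    ring
  -- assemble the equivalence
  set φeq : L ≃ₗ[ℝ] L := LinearEquiv.ofBijective φ₀ ⟨hφinj, hφsurj⟩ with hφeq
  refine ⟨φeq.prodCongr (LinearEquiv.smulOfNeZero ℝ ℝ lam hlam), ?_⟩
  intro p q
  have happ : ∀ r : L × ℝ,
      (φeq.prodCongr (LinearEquiv.smulOfNeZero ℝ ℝ lam hlam)) r = (φ₀ r.1, lam • r.2) := by
    intro r
    rfl
  rw [happ, happ, happ]
  apply Prod.ext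
  · show φ₀ (expBracket D₁ p q).1 = (expBracket D₂ (φ₀ p.1, lam • p.2) (φ₀ q.1, lam • q.2)).1
    simp only [expBracket]
    rw [map_sub, map_add, map_smul, map_smul, hbr p.1 q.1, hcomm q.1, hcomm p.1]
    match_scalars <;> (simp only [smul_eq_mul]; try ring)
  · show (lam • (expBracket D₁ p q).2) = (0 : ℝ)
    simp [expBracket]


end

theorem stmt8 {L : Type*} [LieRing L] [LieAlgebra ℝ L] [Module.Finite ℝ L]
    (e : Basis (Fin 3) ℝ L)
    (h12 : ⁅e 0, e 1⁆ = e 2) (h13 : ⁅e 0, e 2⁆ = 0) (h23 : ⁅e 1, e 2⁆ = 0)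
    (m : Submodule ℝ L) (hm : m = Submodule.span ℝ {e 0, e 1})
    (D₁ D₂ : Module.End ℝ L) (hd₁ : IsLieDeriv D₁) (hd₂ : IsLieDeriv D₂)
    (hp₁ : PosSpec D₁) (hp₂ : PosSpec D₂)
    (hm₁ : ∀ x ∈ m, D₁ x ∈ m) (hm₂ : ∀ x ∈ m, D₂ x ∈ m) :
    ExpIso D₁ D₂ ↔
      ∃ (gm : m ≃ₗ[ℝ] m) (lam : ℝ), lam ≠ 0 ∧
        ∀ v : m, (LinearMap.restrict D₁ hm₁) v
          = lam • gm.symm ((LinearMap.restrict D₂ hm₂) (gm v)) := by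
  constructor
  · exact fun h => fwd e h12 h13 h23 m hm D₁ D₂ hd₁ hd₂ hp₁ hp₂ hm₁ hm₂ h
  · rintro ⟨gm, lam, hlam, hrel⟩
    exact bwd e h12 h13 h23 m hm D₁ D₂ hd₁ hd₂ hm₁ hm₂ gm lam hlam hrel
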